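/- For every real A with 0 < A ≤ 1 and every real x with x ≥ 1/A, one has |e^{−ix} + A·(sin x − x e^{−ix})| ≤ A x, where the absolute value denotes the complex modulus. -/

import Mathlib

open Real Complex

/-- For every real `A` with `0 < A ≤ 1` and every real `x ≥ 1/A`, one has
`|e^{-ix} + A (sin x - x e^{-ix})| ≤ A x`. -/
theorem abs_exp_neg_I_add_le (A x : ℝ) (hA0 : 0 < A) (hA1 : A ≤ 1) (hx : 1 / A ≤ x) :
    ‖(Complex.exp (-Complex.I * x) +
      (A : ℂ) * ((Real.sin x : ℂ) - (x : ℂ) * Complex.exp (-Complex.I * x)))‖ ≤ A * x := by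
  have hAx : 1 ≤ A * x := by
    rw [div_le_iff₀ hA0] at hx
    linarith [hx]
  have hx0 : 0 < x := by nlinarith
  have he : Complex.exp (-Complex.I * x)
      = (Real.cos x : ℂ) - (Real.sin x : ℂ) * Complex.I := by
    rw [show (-Complex.I * (x : ℂ)) = ((-x : ℝ) : ℂ) * Complex.I by push_cast; ring,
      Complex.exp_mul_I, ← Complex.ofReal_cos, ← Complex.ofReal_sin]
    rw [Real.cos_neg, Real.sin_neg]
    push_cast
    ring
  set s := Real.sin x with hs
  set c := Real.cos x with hc
  have hsc : s ^ 2 + c ^ 2 = 1 := Real.sin_sq_add_cos_sq x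
  have h2 : Real.sin (2 * x) = 2 * s * c := Real.sin_two_mul x
  have h2le : Real.sin (2 * x) ≤ 1 := Real.sin_le_one _
  have h2ge : -1 ≤ Real.sin (2 * x) := Real.neg_one_le_sin _
  have hAx0 : 0 < A * x := by linarith
  rw [he]
  have key : ‖((c : ℂ) - (s : ℂ) * Complex.I +
      (A : ℂ) * ((s : ℂ) - (x : ℂ) * ((c : ℂ) - (s : ℂ) * Complex.I)))‖ ^ 2
      ≤ (A * x) ^ 2 := by
    rw [Complex.sq_norm, Complex.normSq_apply]
    simp only [Complex.add_re, Complex.add_im, Complex.sub_re, Complex.sub_im,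
      Complex.mul_re, Complex.mul_im, Complex.ofReal_re, Complex.ofReal_im,
      Complex.I_re, Complex.I_im]
    ring_nf
    nlinarith [sq_nonneg (A*x - 1), sq_nonneg s, sq_nonneg c, sq_nonneg (s - c),
      sq_nonneg (s + c), mul_pos hA0 hx0,
      mul_nonneg (mul_nonneg hA0.le (sub_nonneg.2 hAx)) (by linarith : (0:ℝ) ≤ 1 - Real.sin (2*x)),
      mul_nonneg (mul_nonneg hA0.le (sub_nonneg.2 hAx)) (by linarith : (0:ℝ) ≤ 1 + Real.sin (2*x)),
      mul_nonneg (sub_nonneg.2 hA1) (sub_nonneg.2 hAx)]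
  have habs : 0 ≤ ‖((c : ℂ) - (s : ℂ) * Complex.I +
      (A : ℂ) * ((s : ℂ) - (x : ℂ) * ((c : ℂ) - (s : ℂ) * Complex.I)))‖ :=
    norm_nonneg _
  nlinarith [key, habs, hAx0]
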